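/- Let n = c·2^L and suppose an n×n matrix T has the butterfly tensor representation t_{i_0…i_L j_0…j_L} = Σ_{r_1,…,r_{L+1}} s¹_{i_0…i_L r_1} · (Π_{m=1}^{L} s^{m+1}_{i_0…i_{L−m} j_0…j_{m−1} r_m r_{m+1}}) · s^{L+2}_{j_0…j_L r_{L+1}} with all ranks r_m ranging over {1,…,r}. Then for any fixed values of (i_0, …, i_{L−1}), the submatrix of T with rows {i : digits (i_0,…,i_{L−1})} and all columns has matrix rank at most r. -/

import Mathlib

open Matrix

/-- Binary digit `i_m` (for `m < L`) of an index `i < c·2^L`, in the expansion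
`i = i_L·2^L + Σ_{m<L} i_m·2^{L-1-m}`. -/
def bfDigit (c L : ℕ) (i : Fin (c * 2 ^ L)) (m : Fin L) : Fin 2 :=
  ⟨(i.val / 2 ^ (L - 1 - m.val)) % 2, by omega⟩

/-- Top digit `i_L ∈ {0, …, c−1}` of an index `i < c·2^L`. -/
def bfTop (c L : ℕ) (i : Fin (c * 2 ^ L)) : Fin c :=
  ⟨i.val / 2 ^ L, Nat.div_lt_of_lt_mul
    (lt_of_lt_of_le i.isLt (le_of_eq (Nat.mul_comm c (2 ^ L))))⟩

/-- Re-encoding digits `(i_0,…,i_{L-1})` together with `i_L` gives an index `< c·2^L`. -/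
lemma bfEncode_lt (c L : ℕ) (iL : Fin c) (d : Fin L → Fin 2) :
    iL.val * 2 ^ L + ∑ m : Fin L, (d m).val * 2 ^ (L - 1 - m.val) < c * 2 ^ L := by
  have hsum : (∑ m : Fin L, (d m).val * 2 ^ (L - 1 - m.val)) < 2 ^ L := by
    have h1 : (∑ m : Fin L, (d m).val * 2 ^ (L - 1 - m.val))
        ≤ ∑ m : Fin L, 1 * 2 ^ (L - 1 - m.val) := by
      gcongr with m _
      exact Nat.lt_succ_iff.mp (d m).isLt
    have h2 : (∑ m : Fin L, 1 * 2 ^ (L - 1 - m.val)) = ∑ k ∈ Finset.range L, 2 ^ (L - 1 - k) := by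
      simp only [one_mul]
      exact Fin.sum_univ_eq_sum_range (fun k => 2 ^ (L - 1 - k)) L
    have h3 : (∑ k ∈ Finset.range L, 2 ^ (L - 1 - k)) = ∑ k ∈ Finset.range L, 2 ^ k := by
      exact Finset.sum_range_reflect (fun k => 2 ^ k) L
    have h4 : ∀ n : ℕ, (∑ k ∈ Finset.range n, 2 ^ k) = 2 ^ n - 1 := by
      intro n
      induction n with
      | zero => simp
      | succ n ih =>
        rw [Finset.sum_range_succ, ih]
        have := Nat.one_le_two_pow (n := n)
        rw [pow_succ]
        omega
    have h5 : (1 : ℕ) ≤ 2 ^ L := Nat.one_le_two_pow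
    rw [h2, h3, h4 L] at h1
    omega
  have hiL : iL.val + 1 ≤ c := iL.isLt
  calc iL.val * 2 ^ L + ∑ m : Fin L, (d m).val * 2 ^ (L - 1 - m.val)
      < iL.val * 2 ^ L + 2 ^ L := Nat.add_lt_add_left hsum _
    _ = (iL.val + 1) * 2 ^ L := by ring
    _ ≤ c * 2 ^ L := Nat.mul_le_mul_right _ hiL

/-- The index with digits `(i_0,…,i_{L-1})` and top digit `i_L`. -/
def bfEncode (c L : ℕ) (iL : Fin c) (d : Fin L → Fin 2) : Fin (c * 2 ^ L) :=
  ⟨iL.val * 2 ^ L + ∑ m : Fin L, (d m).val * 2 ^ (L - 1 - m.val), bfEncode_lt c L iL d⟩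


lemma geo_sum (n : ℕ) : (∑ k ∈ Finset.range n, 2 ^ k) = 2 ^ n - 1 := by
  induction n with
  | zero => simp
  | succ n ih =>
    rw [Finset.sum_range_succ, ih]
    have := Nat.one_le_two_pow (n := n)
    rw [pow_succ]; omega

lemma ico_pow_sum (a b : ℕ) : (∑ k ∈ Finset.Ico a b, 2 ^ (b - 1 - k)) = 2 ^ (b - a) - 1 := by
  rcases le_or_gt b a with h | h
  · rw [Finset.Ico_eq_empty (by omega)]
    simp [Nat.sub_eq_zero_of_le h]
  · rw [Finset.sum_Ico_eq_sum_range]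
    have : ∀ k ∈ Finset.range (b - a), 2 ^ (b - 1 - (a + k)) = 2 ^ ((b - a) - 1 - k) := by
      intro k hk; congr 1; omega
    rw [Finset.sum_congr rfl this, Finset.sum_range_reflect (fun j => 2 ^ j) (b - a), geo_sum]


def bfF (L : ℕ) (d : Fin L → Fin 2) (k : ℕ) : ℕ :=
  (if h : k < L then (d ⟨k, h⟩).val else 0) * 2 ^ (L - 1 - k)

lemma bfSum_eq (L : ℕ) (d : Fin L → Fin 2) :
    (∑ m : Fin L, (d m).val * 2 ^ (L - 1 - m.val)) = ∑ k ∈ Finset.range L, bfF L d k := by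
  rw [← Fin.sum_univ_eq_sum_range (bfF L d) L]
  apply Finset.sum_congr rfl
  intro m _
  simp [bfF, m.isLt]

lemma bfF_le (L : ℕ) (d : Fin L → Fin 2) (k : ℕ) : bfF L d k ≤ 2 ^ (L - 1 - k) := by
  unfold bfF
  rcases Nat.lt_or_ge k L with h | h
  · rw [dif_pos h]
    have h1 : (d ⟨k, h⟩).val ≤ 1 := Nat.lt_succ_iff.mp (d ⟨k, h⟩).isLt
    calc (d ⟨k, h⟩).val * 2 ^ (L - 1 - k) ≤ 1 * 2 ^ (L - 1 - k) := Nat.mul_le_mul_right _ h1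
      _ = 2 ^ (L - 1 - k) := one_mul _
  · rw [dif_neg (by omega)]; simp

lemma bfSum_lt' (L : ℕ) (d : Fin L → Fin 2) :
    (∑ m : Fin L, (d m).val * 2 ^ (L - 1 - m.val)) < 2 ^ L := by
  rw [bfSum_eq]
  have h1 : (∑ k ∈ Finset.range L, bfF L d k) ≤ ∑ k ∈ Finset.range L, 2 ^ (L - 1 - k) := by
    gcongr with k _; exact bfF_le L d k
  have hR : (∑ k ∈ Finset.range L, 2 ^ (L - 1 - k)) = 2 ^ L - 1 := by
    rw [Finset.range_eq_Ico, ico_pow_sum, Nat.sub_zero]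
  rw [hR] at h1
  have h3 : (0:ℕ) < 2 ^ L := Nat.two_pow_pos L
  omega

lemma bfDigit_encode_val (c L : ℕ) (iL : Fin c) (d : Fin L → Fin 2) (m : Fin L)
    (v : ℕ) (hv : v = iL.val * 2 ^ L + ∑ m' : Fin L, (d m').val * 2 ^ (L - 1 - m'.val)) :
    (v / 2 ^ (L - 1 - m.val)) % 2 = (d m).val := by
  set e := L - 1 - m.val with he
  have hm : m.val < L := m.isLt
  set p := 2 ^ e with hp
  have hppos : 0 < p := Nat.two_pow_pos e
  -- split the sum
  rw [bfSum_eq] at hv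
  have hsplit : (∑ k ∈ Finset.range L, bfF L d k)
      = (∑ k ∈ Finset.range m.val, bfF L d k) + bfF L d m.val
        + ∑ k ∈ Finset.Ico (m.val + 1) L, bfF L d k := by
    rw [Finset.range_eq_Ico, ← Finset.sum_Ico_consecutive _ (by omega : 0 ≤ m.val + 1) (by omega : m.val + 1 ≤ L),
      ← Finset.range_eq_Ico, Finset.sum_range_succ]
  have hBlt : (∑ k ∈ Finset.Ico (m.val + 1) L, bfF L d k) < p := by
    have h1 : (∑ k ∈ Finset.Ico (m.val + 1) L, bfF L d k)
        ≤ ∑ k ∈ Finset.Ico (m.val + 1) L, 2 ^ (L - 1 - k) := by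
      gcongr with k _; exact bfF_le L d k
    rw [ico_pow_sum] at h1
    have h2 : L - (m.val + 1) = e := by omega
    rw [h2] at h1
    omega
  set A := ∑ k ∈ Finset.range m.val, bfF L d k with hA
  set B := ∑ k ∈ Finset.Ico (m.val + 1) L, bfF L d k with hB
  have hdvd : 2 ^ (e + 1) ∣ iL.val * 2 ^ L + A := by
    apply Nat.dvd_add
    · exact Dvd.dvd.mul_left (pow_dvd_pow 2 (by omega)) _
    · apply Finset.dvd_sum
      intro k hk
      have hk' : k < m.val := Finset.mem_range.mp hk
      exact Dvd.dvd.mul_left (pow_dvd_pow 2 (by omega)) _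
  obtain ⟨K, hK⟩ := hdvd
  have hfm : bfF L d m.val = (d m).val * p := by
    simp [bfF, hm]
    exact Or.inl rfl
  have hv2 : v = B + (2 * K + (d m).val) * p := by
    rw [hv, hsplit, hfm]
    calc iL.val * 2 ^ L + (A + (d m).val * p + B)
        = (iL.val * 2 ^ L + A) + (d m).val * p + B := by ring
      _ = 2 ^ (e + 1) * K + (d m).val * p + B := by rw [hK]
      _ = B + (2 * K + (d m).val) * p := by rw [pow_succ]; ring
  rw [hv2, Nat.add_mul_div_right _ _ hppos, Nat.div_eq_of_lt hBlt]
  have := (d m).isLt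
  omega

lemma bfTop_encode_val (c L : ℕ) (iL : Fin c) (d : Fin L → Fin 2)
    (v : ℕ) (hv : v = iL.val * 2 ^ L + ∑ m' : Fin L, (d m').val * 2 ^ (L - 1 - m'.val)) :
    v / 2 ^ L = iL.val := by
  have hS := bfSum_lt' L d
  rw [hv, add_comm, Nat.add_mul_div_right _ _ (Nat.two_pow_pos L),
    Nat.div_eq_of_lt hS, zero_add]

/-- If an `n×n` matrix `T`, `n = c·2^L`, admits a butterfly tensor representation with all
ranks in `{1,…,r}`, then for each fixed `(i_0,…,i_{L-1})` the submatrix of `T` consisting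
of the rows with those digits (and all columns) has matrix rank at most `r`. -/
theorem butterfly_row_block_rank_le (c L r : ℕ) (hc : 0 < c) (hr : 0 < r)
    (T : Matrix (Fin (c * 2 ^ L)) (Fin (c * 2 ^ L)) ℝ)
    (s1 : (Fin L → Fin 2) → Fin c → Fin r → ℝ)
    (score : (mm : Fin L) → (Fin (L - mm.val) → Fin 2) → (Fin (mm.val + 1) → Fin 2) →
      Fin r → Fin r → ℝ)
    (sL2 : (Fin L → Fin 2) → Fin c → Fin r → ℝ)
    (hT : ∀ i j : Fin (c * 2 ^ L),
      T i j = ∑ ρ : Fin (L + 1) → Fin r,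
        s1 (bfDigit c L i) (bfTop c L i) (ρ 0) *
        (∏ mm : Fin L,
          score mm
            (fun a => bfDigit c L i ⟨a.val, by have := a.isLt; have := mm.isLt; omega⟩)
            (fun b => bfDigit c L j ⟨b.val, by have := b.isLt; have := mm.isLt; omega⟩)
            (ρ mm.castSucc) (ρ mm.succ)) *
        sL2 (bfDigit c L j) (bfTop c L j) (ρ (Fin.last L))) :
    ∀ d : Fin L → Fin 2,
      (T.submatrix (fun iL : Fin c => bfEncode c L iL d) id).rank ≤ r := by
  intro d
  have hdig : ∀ iL : Fin c, bfDigit c L (bfEncode c L iL d) = d := by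
    intro iL; funext m; apply Fin.ext
    exact bfDigit_encode_val c L iL d m _ rfl
  have htop : ∀ iL : Fin c, bfTop c L (bfEncode c L iL d) = iL := by
    intro iL; apply Fin.ext
    exact bfTop_encode_val c L iL d _ rfl
  set A : Matrix (Fin c) (Fin r) ℝ := fun iL ρ0 => s1 d iL ρ0 with hAdef
  set B : Matrix (Fin r) (Fin (c * 2 ^ L)) ℝ := fun ρ0 j =>
    ∑ τ : Fin L → Fin r, ((fun ρ : Fin (L + 1) → Fin r =>
      (∏ mm : Fin L,
        score mm
          (fun a => d ⟨a.val, by have := a.isLt; have := mm.isLt; omega⟩)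
          (fun b => bfDigit c L j ⟨b.val, by have := b.isLt; have := mm.isLt; omega⟩)
          (ρ mm.castSucc) (ρ mm.succ)) *
      sL2 (bfDigit c L j) (bfTop c L j) (ρ (Fin.last L))) (Fin.cons ρ0 τ)) with hBdef
  have key : T.submatrix (fun iL : Fin c => bfEncode c L iL d) id = A * B := by
    ext iL j
    rw [Matrix.submatrix_apply, id, hT, Matrix.mul_apply]
    simp only [hAdef, hBdef, hdig iL, htop iL, Finset.mul_sum]
    rw [← Equiv.sum_comp (Fin.consEquiv (fun _ : Fin (L + 1) => Fin r)), Fintype.sum_prod_type]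
    apply Finset.sum_congr rfl
    intro ρ0 _
    apply Finset.sum_congr rfl
    intro τ _
    simp only [Fin.consEquiv_apply, Fin.cons_zero]
    ring
  rw [key]
  calc (A * B).rank ≤ A.rank := Matrix.rank_mul_le_left A B
    _ ≤ Fintype.card (Fin r) := Matrix.rank_le_card_width A
    _ = r := Fintype.card_fin r
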